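/- For probability mass functions p, p' on a finite set Y with total variation ‖p-p'‖₁ = Σ_y |p(y)-p'(y)| ≤ θ ≤ 1/2, the Shannon entropies satisfy |H(p) - H(p')| ≤ θ * log₂(|Y|/θ). -/

import Mathlib

open Real Set

lemma eta_add_le (a d : ℝ) (ha : 0 ≤ a) (hd : 0 ≤ d) :
    Real.negMulLog (a + d) - Real.negMulLog a ≤ Real.negMulLog d := by
  rcases eq_or_lt_of_le ha with rfl | ha0
  · simp
  rcases eq_or_lt_of_le hd with rfl | hd0
  · simp
  have h1 : a * Real.log a ≤ a * Real.log (a + d) :=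
    mul_le_mul_of_nonneg_left (Real.log_le_log ha0 (by linarith)) ha
  have h2 : d * Real.log d ≤ d * Real.log (a + d) :=
    mul_le_mul_of_nonneg_left (Real.log_le_log hd0 (by linarith)) hd
  simp only [Real.negMulLog]
  nlinarith

lemma eta_symm_le {d : ℝ} (h0 : 0 ≤ d) (h2 : d ≤ 1/2) :
    Real.negMulLog (1 - d) ≤ Real.negMulLog d := by
  set f : ℝ → ℝ := fun x => Real.negMulLog x - Real.negMulLog (1 - x) with hf
  have hderiv : ∀ x ∈ Ioo (0:ℝ) (1/2),
      HasDerivAt f (-Real.log x - Real.log (1 - x) - 2) x := by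
    intro x hx
    have hx1 : (1:ℝ) - x ≠ 0 := by intro h; have := hx.2; linarith
    have h1 : HasDerivAt Real.negMulLog (-Real.log x - 1) x :=
      Real.hasDerivAt_negMulLog (ne_of_gt hx.1)
    have h2 : HasDerivAt (fun y : ℝ => 1 - y) (-1) x := by
      simpa using (hasDerivAt_id x).const_sub 1
    have h3 : HasDerivAt (fun y : ℝ => Real.negMulLog (1 - y))
        ((-Real.log (1 - x) - 1) * (-1)) x :=
      (Real.hasDerivAt_negMulLog hx1).comp x h2
    have := h1.sub h3
    refine this.congr_deriv ?_
    ring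
  have hc : ConcaveOn ℝ (Icc (0:ℝ) (1/2)) f := by
    apply AntitoneOn.concaveOn_of_deriv (convex_Icc _ _)
    · exact (Real.continuous_negMulLog.sub
        (Real.continuous_negMulLog.comp (continuous_const.sub continuous_id))).continuousOn
    · intro x hx
      rw [interior_Icc] at hx
      exact (hderiv x hx).differentiableAt.differentiableWithinAt
    · intro x hx y hy hxy
      rw [interior_Icc] at hx hy
      rw [(hderiv x hx).deriv, (hderiv y hy).deriv]
      have hxx : 0 < x * (1 - x) := by nlinarith [hx.1, hx.2]
      have hyy : 0 < y * (1 - y) := by nlinarith [hy.1, hy.2]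
      have hle : x * (1 - x) ≤ y * (1 - y) := by nlinarith [hx.1, hx.2, hy.1, hy.2]
      have := Real.log_le_log hxx hle
      rw [Real.log_mul (ne_of_gt hx.1) (by nlinarith [hx.2] : (1:ℝ) - x ≠ 0),
        Real.log_mul (ne_of_gt hy.1) (by nlinarith [hy.2] : (1:ℝ) - y ≠ 0)] at this
      linarith
  have h00 : (0:ℝ) ∈ Icc (0:ℝ) (1/2) := by constructor <;> norm_num
  have h12 : (1/2:ℝ) ∈ Icc (0:ℝ) (1/2) := by constructor <;> norm_num
  have key := hc.2 h00 h12 (show (0:ℝ) ≤ 1 - 2*d by linarith) (show (0:ℝ) ≤ 2*d by linarith) (by ring)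
  have harg : (1 - 2*d) • (0:ℝ) + (2*d) • (1/2 : ℝ) = d := by
    simp [smul_eq_mul]; ring
  rw [harg] at key
  have hf0 : f 0 = 0 := by simp [hf]
  have hf12 : f (1/2) = 0 := by norm_num [hf]
  rw [hf0, hf12] at key
  simp only [smul_eq_mul, mul_zero, add_zero] at key
  have : 0 ≤ f d := key
  simp only [hf] at this
  linarith


lemma eta_sub_le {a d : ℝ} (ha : 0 ≤ a) (hd : 0 ≤ d) (had : a + d ≤ 1) (hd2 : d ≤ 1/2) :
    Real.negMulLog a - Real.negMulLog (a + d) ≤ Real.negMulLog d := by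
  rcases eq_or_lt_of_le hd with rfl | hd0
  · simp
  set g : ℝ → ℝ := fun x => Real.negMulLog (x + d) - Real.negMulLog x with hg
  have hderiv : ∀ x ∈ Ioo (0:ℝ) (1 - d),
      HasDerivAt g (Real.log x - Real.log (x + d)) x := by
    intro x hx
    have hxd : x + d ≠ 0 := by have := hx.1; positivity
    have h1 : HasDerivAt (fun y : ℝ => Real.negMulLog (y + d))
        ((-Real.log (x + d) - 1) * 1) x :=
      by have := (Real.hasDerivAt_negMulLog hxd).comp x ((hasDerivAt_id' x).add_const d); exact this
    have h2 : HasDerivAt Real.negMulLog (-Real.log x - 1) x :=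
      Real.hasDerivAt_negMulLog (ne_of_gt hx.1)
    have := h1.sub h2
    refine this.congr_deriv ?_
    ring
  have hmono : AntitoneOn g (Icc (0:ℝ) (1 - d)) := by
    apply antitoneOn_of_deriv_nonpos (convex_Icc _ _)
    · exact ((Real.continuous_negMulLog.comp (continuous_id.add continuous_const)).sub
        Real.continuous_negMulLog).continuousOn
    · intro x hx
      rw [interior_Icc] at hx
      exact (hderiv x hx).differentiableAt.differentiableWithinAt
    · intro x hx
      rw [interior_Icc] at hx
      rw [(hderiv x hx).deriv]
      have := Real.log_le_log hx.1 (by linarith : x ≤ x + d)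
      linarith
  have hmem1 : a ∈ Icc (0:ℝ) (1 - d) := ⟨ha, by linarith⟩
  have hmem2 : (1 - d : ℝ) ∈ Icc (0:ℝ) (1 - d) := ⟨by linarith, le_refl _⟩
  have h1 : g (1 - d) ≤ g a := hmono hmem1 hmem2 (by linarith)
  have h3 := eta_symm_le (le_of_lt hd0) hd2
  simp only [hg] at h1
  rw [show (1:ℝ) - d + d = 1 by ring] at h1
  simp only [Real.negMulLog_one, zero_sub] at h1
  linarith

lemma eta_abs_le' {a b : ℝ} (ha : 0 ≤ a) (hb1 : b ≤ 1) (hab : a ≤ b) (hd2 : b - a ≤ 1/2) :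
    |Real.negMulLog a - Real.negMulLog b| ≤ Real.negMulLog (b - a) := by
  have hd : 0 ≤ b - a := by linarith
  have h1 := eta_add_le a (b - a) ha hd
  have h2 := eta_sub_le ha hd (by linarith) hd2
  rw [show a + (b - a) = b by ring] at h1 h2
  rw [abs_le]
  constructor <;> linarith

lemma jensen_eta {Y : Type*} [Fintype Y] (e : Y → ℝ) (he : ∀ y, 0 ≤ e y)
    (hcard : 0 < Fintype.card Y) :
    ∑ y, Real.negMulLog (e y) ≤
      (∑ y, e y) * Real.log (Fintype.card Y) + Real.negMulLog (∑ y, e y) := by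
  set n : ℝ := (Fintype.card Y : ℝ) with hn
  have hn0 : (0:ℝ) < n := by rw [hn]; exact_mod_cast hcard
  have key := Real.concaveOn_negMulLog.le_map_sum (t := Finset.univ)
    (w := fun _ : Y => 1 / n) (p := fun y => n * e y)
    (fun i _ => (one_div_pos.mpr hn0).le)
    (by simp [Finset.sum_const, Finset.card_univ]; field_simp; exact hn.symm)
    (fun i _ => Set.mem_Ici.mpr (mul_nonneg hn0.le (he i)))
  have harg : ∑ y : Y, (1 / n) • (n * e y) = ∑ y, e y := by
    apply Finset.sum_congr rfl
    intro y _
    rw [smul_eq_mul]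
    field_simp
  rw [harg] at key
  have hterm : ∀ y : Y, (1 / n) • Real.negMulLog (n * e y)
      = e y * ((1/n) * Real.negMulLog n) + Real.negMulLog (e y) := by
    intro y
    rw [smul_eq_mul, Real.negMulLog_mul]
    field_simp
  rw [Finset.sum_congr rfl (fun y _ => hterm y), Finset.sum_add_distrib,
    ← Finset.sum_mul] at key
  have hval : (1/n) * Real.negMulLog n = -Real.log n := by
    simp only [Real.negMulLog]
    field_simp
  rw [hval] at key
  nlinarith [key]

lemma mono_aux {K : ℝ} (hK : 2 ≤ K) :
    MonotoneOn (fun t => t * Real.log K + Real.negMulLog t) (Icc (0:ℝ) (1/2)) := by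
  apply monotoneOn_of_deriv_nonneg (convex_Icc _ _)
  · exact ((continuous_id.mul continuous_const).add Real.continuous_negMulLog).continuousOn
  · intro x hx
    rw [interior_Icc] at hx
    have hder : HasDerivAt (fun t : ℝ => t * Real.log K + Real.negMulLog t)
        (Real.log K + (-Real.log x - 1)) x := by
      have h1 : HasDerivAt (fun t : ℝ => t * Real.log K) (Real.log K) x := by
        simpa using (hasDerivAt_id x).mul_const (Real.log K)
      exact h1.add (Real.hasDerivAt_negMulLog (ne_of_gt hx.1))
    exact hder.differentiableAt.differentiableWithinAt
  · intro x hx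
    rw [interior_Icc] at hx
    have hder : HasDerivAt (fun t : ℝ => t * Real.log K + Real.negMulLog t)
        (Real.log K + (-Real.log x - 1)) x := by
      have h1 : HasDerivAt (fun t : ℝ => t * Real.log K) (Real.log K) x := by
        simpa using (hasDerivAt_id x).mul_const (Real.log K)
      exact h1.add (Real.hasDerivAt_negMulLog (ne_of_gt hx.1))
    rw [hder.deriv]
    have h2 : Real.log 2 ≤ Real.log K := Real.log_le_log two_pos hK
    have h3 : Real.log x ≤ Real.log (1/2) := Real.log_le_log hx.1 (le_of_lt hx.2)
    have h4 : Real.log (1/2) = -Real.log 2 := by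
      rw [one_div, Real.log_inv]
    have h5 : (1:ℝ) < Real.log 4 := by
      rw [Real.lt_log_iff_exp_lt (by norm_num : (0:ℝ) < 4)]
      calc Real.exp 1 < 2.7182818286 := Real.exp_one_lt_d9
        _ < 4 := by norm_num
    have h6 : Real.log 4 = 2 * Real.log 2 := by
      rw [show (4:ℝ) = 2^2 by norm_num, Real.log_pow]
      push_cast; ring
    linarith

theorem stmt7 {Y : Type*} [Fintype Y] (p p' : Y → ℝ) (θ : ℝ)
    (hp : ∀ y, 0 ≤ p y) (hp1 : ∑ y, p y = 1)
    (hp' : ∀ y, 0 ≤ p' y) (hp'1 : ∑ y, p' y = 1)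
    (htv : ∑ y, |p y - p' y| ≤ θ) (hθ : θ ≤ 1 / 2) :
    |(-∑ y, p y * Real.logb 2 (p y)) - (-∑ y, p' y * Real.logb 2 (p' y))|
      ≤ θ * Real.logb 2 ((Fintype.card Y : ℝ) / θ) := by
  classical
  have hθ0 : 0 ≤ θ := le_trans (Finset.sum_nonneg fun y _ => abs_nonneg _) htv
  have hlog2 : (0:ℝ) < Real.log 2 := Real.log_pos one_lt_two
  have hcard1 : 1 ≤ Fintype.card Y := by
    by_contra h
    push_neg at h
    interval_cases h' : Fintype.card Y
    · have : IsEmpty Y := Fintype.card_eq_zero_iff.mp h'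
      simp [Finset.univ_eq_empty] at hp1
  set ε := ∑ y, |p y - p' y| with hε
  have hε0 : 0 ≤ ε := Finset.sum_nonneg fun y _ => abs_nonneg _
  have hεθ : ε ≤ θ := htv
  set A := ∑ y, Real.negMulLog (p y) with hA
  set B := ∑ y, Real.negMulLog (p' y) with hB
  -- key natural-log inequality
  have key : |A - B| ≤ θ * Real.log ((Fintype.card Y : ℝ) / θ) := by
    rcases eq_or_lt_of_le hε0 with h0 | hεpos
    · -- p = p'
      have hpp : ∀ y, p y = p' y := by
        intro y
        have hz := (Finset.sum_eq_zero_iff_of_nonneg (fun y _ => abs_nonneg _)).mp h0.symm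
        have := hz y (Finset.mem_univ y)
        rwa [abs_eq_zero, sub_eq_zero] at this
      have hAB : A = B := Finset.sum_congr rfl fun y _ => by rw [hpp y]
      rw [hAB, sub_self, abs_zero]
      rcases eq_or_lt_of_le hθ0 with h1 | h1
      · rw [← h1]; simp
      · apply mul_nonneg hθ0
        apply Real.log_nonneg
        rw [le_div_iff₀ h1]
        have h2 : (1:ℝ) ≤ (Fintype.card Y : ℝ) := by exact_mod_cast hcard1
        linarith
    · -- ε > 0, so card ≥ 2
      have hθpos : 0 < θ := lt_of_lt_of_le hεpos hεθ
      have hcard2 : 2 ≤ Fintype.card Y := by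
        by_contra h
        push_neg at h
        have hn1 : Fintype.card Y = 1 := le_antisymm (by omega) hcard1
        obtain ⟨y₀, hy₀⟩ := Fintype.card_eq_one_iff.mp hn1
        have huniv : (Finset.univ : Finset Y) = {y₀} :=
          Finset.ext fun y => by simp [hy₀ y]
        have h1 : p y₀ = 1 := by rw [← hp1, huniv, Finset.sum_singleton]
        have h2 : p' y₀ = 1 := by rw [← hp'1, huniv, Finset.sum_singleton]
        have : ε = 0 := by rw [hε, huniv, Finset.sum_singleton, h1, h2]; simp
        linarith
      have hK2 : (2:ℝ) ≤ (Fintype.card Y : ℝ) := by exact_mod_cast hcard2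
      have hple : ∀ y, p y ≤ 1 := fun y => by
        rw [← hp1]
        exact Finset.single_le_sum (fun i _ => hp i) (Finset.mem_univ y)
      have hp'le : ∀ y, p' y ≤ 1 := fun y => by
        rw [← hp'1]
        exact Finset.single_le_sum (fun i _ => hp' i) (Finset.mem_univ y)
      have habs : ∀ y, |p y - p' y| ≤ 1/2 := fun y => by
        have h := Finset.single_le_sum (f := fun y => |p y - p' y|)
          (fun i _ => abs_nonneg _) (Finset.mem_univ y)
        rw [← hε] at h
        linarith
      have step1 : |A - B| ≤ ∑ y, Real.negMulLog |p y - p' y| := by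
        calc |A - B| = |∑ y, (Real.negMulLog (p y) - Real.negMulLog (p' y))| := by
              rw [Finset.sum_sub_distrib]
          _ ≤ ∑ y, |Real.negMulLog (p y) - Real.negMulLog (p' y)| :=
              Finset.abs_sum_le_sum_abs _ _
          _ ≤ ∑ y, Real.negMulLog |p y - p' y| := by
              apply Finset.sum_le_sum
              intro y _
              rcases le_total (p y) (p' y) with h | h
              · have := eta_abs_le' (hp y) (hp'le y) h (by
                  have := habs y; rwa [abs_of_nonpos (by linarith), neg_sub] at this)
                rwa [abs_of_nonpos (by linarith : p y - p' y ≤ 0), neg_sub]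
              · have := eta_abs_le' (hp' y) (hple y) h (by
                  have := habs y; rwa [abs_of_nonneg (by linarith)] at this)
                rw [abs_of_nonneg (by linarith : 0 ≤ p y - p' y)]
                rwa [abs_sub_comm]
      have step2 : ∑ y, Real.negMulLog |p y - p' y| ≤
          ε * Real.log (Fintype.card Y) + Real.negMulLog ε := by
        have := jensen_eta (fun y => |p y - p' y|) (fun y => abs_nonneg _) (by omega)
        simpa [← hε] using this
      have step3 : ε * Real.log (Fintype.card Y) + Real.negMulLog ε ≤
          θ * Real.log (Fintype.card Y) + Real.negMulLog θ := by
        exact mono_aux hK2 ⟨hε0, by linarith⟩ ⟨hθ0, hθ⟩ hεθ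
      have step4 : θ * Real.log (Fintype.card Y) + Real.negMulLog θ
          = θ * Real.log ((Fintype.card Y : ℝ) / θ) := by
        rw [Real.log_div (by positivity) (ne_of_gt hθpos), Real.negMulLog]
        ring
      linarith
  -- convert logb to log
  have hL : (-∑ y, p y * Real.logb 2 (p y)) = A / Real.log 2 := by
    rw [hA, Finset.sum_div, ← Finset.sum_neg_distrib]
    apply Finset.sum_congr rfl
    intro y _
    simp only [Real.negMulLog, Real.logb]
    ring
  have hL' : (-∑ y, p' y * Real.logb 2 (p' y)) = B / Real.log 2 := by
    rw [hB, Finset.sum_div, ← Finset.sum_neg_distrib]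
    apply Finset.sum_congr rfl
    intro y _
    simp only [Real.negMulLog, Real.logb]
    ring
  rw [hL, hL', div_sub_div_same, abs_div, abs_of_pos hlog2, Real.logb,
    ← mul_div_assoc]
  exact div_le_div_of_nonneg_right key hlog2.le
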